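/- (Size-control part of Theorem 6 of the paper.) In the finite-sample Bernoulli testing framework, the likelihood ratio test φ̄ controls size over the composite null: for every p ∈ N(b), RP_{φ̄}(p) ≤ α. -/

import Mathlib

/-- Likelihood of the binary outcome vector `y` under Bernoulli probabilities `p`. -/
def lik {n : ℕ} (p : Fin n → ℝ) (y : Fin n → Bool) : ℝ :=
  ∏ i, if y i then p i else 1 - p i

/-- Rejection probability of the (possibly randomized) test `φ` under `p`. -/
def rejProb {n : ℕ} (φ : (Fin n → Bool) → ℝ) (p : Fin n → ℝ) : ℝ :=
  ∑ y : Fin n → Bool, φ y * lik p y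

/-- The set `N(b)` of Bernoulli probability vectors compatible with the null `β = b`. -/
def nullSet {n K : ℕ} (X : Fin n → Fin K → ℝ) (b : Fin K → ℝ) : Set (Fin n → ℝ) :=
  {p | (∀ i, p i ∈ Set.Icc (0 : ℝ) 1) ∧
    ∀ i, (0 ≤ (∑ j, X i j * b j) → 1/2 ≤ p i) ∧
         ((∑ j, X i j * b j) ≤ 0 → p i ≤ 1/2)}

noncomputable def stepfn (ξ u v : ℝ) : ℝ := if v < u then 1 else if u = v then ξ else 0

lemma stepfn_mono {ξ : ℝ} (hξ0 : 0 ≤ ξ) (hξ1 : ξ ≤ 1) {u u' : ℝ} (v : ℝ) (h : u ≤ u') :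
    stepfn ξ u v ≤ stepfn ξ u' v := by
  unfold stepfn
  split_ifs <;> try linarith
  all_goals { exfalso; rename_i hne; exact hne (by linarith) }

lemma stepfn_smul {ξ : ℝ} (c u v : ℝ) (hc : 0 < c) : stepfn ξ (c*u) (c*v) = stepfn ξ u v := by
  unfold stepfn
  have h1 : (c * v < c * u) ↔ v < u := mul_lt_mul_iff_right₀ hc
  have h2 : (c * u = c * v) ↔ u = v := mul_right_inj' (ne_of_gt hc)
  simp only [h1, h2]

lemma sum_double {n : ℕ} (i : Fin n) (f : (Fin n → Bool) → ℝ) :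
    2 * ∑ y : Fin n → Bool, f y =
    ∑ y : Fin n → Bool, (f (Function.update y i true) + f (Function.update y i false)) := by
  let e : (Fin n → Bool) ≃ (Fin n → Bool) :=
    { toFun := fun y => Function.update y i (!y i)
      invFun := fun y => Function.update y i (!y i)
      left_inv := by intro y; funext j; by_cases hj : j = i <;> simp [hj]
      right_inv := by intro y; funext j; by_cases hj : j = i <;> simp [hj] }
  have h1 : ∑ y : Fin n → Bool, f y = ∑ y : Fin n → Bool, f (e y) :=
    (Equiv.sum_comp e f).symm
  have h2 : ∀ y : Fin n → Bool,
      f y + f (e y) = f (Function.update y i true) + f (Function.update y i false) := by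
    intro y
    rcases Bool.eq_false_or_eq_true (y i) with hb | hb
    · have hy : Function.update y i true = y := by rw [← hb]; exact Function.update_eq_self i y
      have he : e y = Function.update y i false := by simp [e, hb]
      rw [hy, he]
    · have hy : Function.update y i false = y := by rw [← hb]; exact Function.update_eq_self i y
      have he : e y = Function.update y i true := by simp [e, hb]
      rw [hy, he]; ring
  calc 2 * ∑ y : Fin n → Bool, f y = ∑ y : Fin n → Bool, (f y + f (e y)) := by
        rw [Finset.sum_add_distrib, ← h1]; ring
    _ = _ := Finset.sum_congr rfl fun y _ => h2 y

lemma lik_update {n : ℕ} (p : Fin n → ℝ) (y : Fin n → Bool) (i : Fin n) (c : Bool) :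
    lik p (Function.update y i c) =
      (if c then p i else 1 - p i) *
        ∏ j ∈ Finset.univ \ {i}, (if y j then p j else 1 - p j) := by
  unfold lik
  have hfun : (fun j => if Function.update y i c j then p j else 1 - p j) =
      Function.update (fun j => if y j then p j else 1 - p j) i (if c then p i else 1 - p i) := by
    funext j
    by_cases hj : j = i
    · subst hj; simp
    · simp [Function.update_of_ne hj]
  calc (∏ j, if Function.update y i c j then p j else 1 - p j)
      = ∏ j, Function.update (fun j => if y j then p j else 1 - p j) i
          (if c then p i else 1 - p i) j := by rw [hfun]
    _ = _ := Finset.prod_update_of_mem (Finset.mem_univ i) _ _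

lemma rejProb_update_eq {n : ℕ} (φ : (Fin n → Bool) → ℝ) (p : Fin n → ℝ) (i : Fin n) :
    2 * rejProb φ p = ∑ y : Fin n → Bool,
      (φ (Function.update y i true) * p i + φ (Function.update y i false) * (1 - p i)) *
        ∏ j ∈ Finset.univ \ {i}, (if y j then p j else 1 - p j) := by
  rw [rejProb, sum_double i (fun y => φ y * lik p y)]
  refine Finset.sum_congr rfl fun y _ => ?_
  simp only [lik_update]
  norm_num
  ring

lemma rejProb_mono {n : ℕ} (φ : (Fin n → Bool) → ℝ) (p : Fin n → ℝ) (i : Fin n) (s t : ℝ)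
    (hp : ∀ j, j ≠ i → 0 ≤ p j ∧ p j ≤ 1)
    (h : ∀ y : Fin n → Bool,
      (t - s) * (φ (Function.update y i true) - φ (Function.update y i false)) ≤ 0) :
    rejProb φ (Function.update p i t) ≤ rejProb φ (Function.update p i s) := by
  have hE : ∀ y : Fin n → Bool,
      (0:ℝ) ≤ ∏ j ∈ Finset.univ \ {i}, (if y j then p j else 1 - p j) := by
    intro y
    refine Finset.prod_nonneg fun j hj => ?_
    have hji : j ≠ i := by
      simp only [Finset.mem_sdiff, Finset.mem_singleton] at hj; exact hj.2
    rcases hp j hji with ⟨h0, h1⟩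
    cases y j <;> simp <;> linarith
  have key : ∀ c : ℝ, 2 * rejProb φ (Function.update p i c) =
      ∑ y : Fin n → Bool,
        (φ (Function.update y i true) * c + φ (Function.update y i false) * (1 - c)) *
          ∏ j ∈ Finset.univ \ {i}, (if y j then p j else 1 - p j) := by
    intro c
    rw [rejProb_update_eq φ (Function.update p i c) i]
    refine Finset.sum_congr rfl fun y _ => ?_
    rw [Function.update_self]
    congr 1
    refine Finset.prod_congr rfl fun j hj => ?_
    have hji : j ≠ i := by
      simp only [Finset.mem_sdiff, Finset.mem_singleton] at hj; exact hj.2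
    rw [Function.update_of_ne hji]
  have hdiff : 0 ≤ 2 * rejProb φ (Function.update p i s) -
      2 * rejProb φ (Function.update p i t) := by
    rw [key s, key t, ← Finset.sum_sub_distrib]
    refine Finset.sum_nonneg fun y _ => ?_
    have h1 := h y
    have h2 := hE y
    set A := φ (Function.update y i true)
    set B := φ (Function.update y i false)
    set E := ∏ j ∈ Finset.univ \ {i}, (if y j then p j else 1 - p j)
    have : (A * s + B * (1 - s)) * E - (A * t + B * (1 - t)) * E
        = (-((t - s) * (A - B))) * E := by ring
    rw [this]
    exact mul_nonneg (by linarith) h2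
  linarith


/-- The least favorable null probabilities `p̄` paired with alternative `p̃`. -/
noncomputable def pbar {n K : ℕ} (X : Fin n → Fin K → ℝ) (b : Fin K → ℝ)
    (pt : Fin n → ℝ) : Fin n → ℝ :=
  fun i => if (∑ j, X i j * b j) * (pt i - 1/2) < 0 ∨
      ((∑ j, X i j * b j) = 0 ∧ pt i < 1/2) then 1/2 else pt i

/-- The likelihood ratio test `φ̄` of `p̄` against `p̃`, with constant `k` and
randomization `ξ`. -/
noncomputable def lrt {n : ℕ} (pt pb : Fin n → ℝ) (k ξ : ℝ)
    (y : Fin n → Bool) : ℝ :=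
  if k * lik pb y < lik pt y then 1
  else if lik pt y = k * lik pb y then ξ else 0

lemma pbar_mem {n K : ℕ} (X : Fin n → Fin K → ℝ) (b : Fin K → ℝ) (pt : Fin n → ℝ)
    (hpt : ∀ i, pt i ∈ Set.Ioo (0:ℝ) 1) (j : Fin n) :
    0 ≤ pbar X b pt j ∧ pbar X b pt j ≤ 1 := by
  unfold pbar
  split_ifs with h
  · norm_num
  · exact ⟨le_of_lt (hpt j).1, le_of_lt (hpt j).2⟩

lemma lrt_eq_stepfn {n : ℕ} (pt pb : Fin n → ℝ) (k ξ : ℝ) (y : Fin n → Bool) :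
    lrt pt pb k ξ y = stepfn ξ (lik pt y) (k * lik pb y) := rfl

lemma key_sign {n K : ℕ} (X : Fin n → Fin K → ℝ) (b : Fin K → ℝ)
    (pt : Fin n → ℝ) (hpt : ∀ i, pt i ∈ Set.Ioo (0:ℝ) 1)
    (k ξ : ℝ) (hk : 0 ≤ k) (hξ : ξ ∈ Set.Icc (0:ℝ) 1)
    (p : Fin n → ℝ) (hp : p ∈ nullSet X b) (i : Fin n) (y : Fin n → Bool) :
    (p i - pbar X b pt i) *
      (lrt pt (pbar X b pt) k ξ (Function.update y i true) -
       lrt pt (pbar X b pt) k ξ (Function.update y i false)) ≤ 0 := by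
  obtain ⟨hp1, hp2⟩ := hp
  set pb := pbar X b pt with hpbdef
  set a := pt i with hadef
  have ha0 : 0 < a := (hpt i).1
  have ha1 : a < 1 := (hpt i).2
  set At := ∏ j ∈ Finset.univ \ {i}, (if y j then pt j else 1 - pt j) with hAtdef
  set Ab := ∏ j ∈ Finset.univ \ {i}, (if y j then pb j else 1 - pb j) with hAbdef
  have hAt : 0 ≤ At := by
    refine Finset.prod_nonneg fun j _ => ?_
    cases y j <;> simp <;> linarith [(hpt j).1, (hpt j).2]
  have hAb : 0 ≤ Ab := by
    refine Finset.prod_nonneg fun j _ => ?_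
    rcases pbar_mem X b pt hpt j with ⟨h0, h1⟩
    cases y j <;> simp <;> linarith
  have hφ : ∀ c : Bool, lrt pt pb k ξ (Function.update y i c) =
      stepfn ξ ((if c then a else 1 - a) * At) (k * ((if c then pb i else 1 - pb i) * Ab)) := by
    intro c
    rw [lrt_eq_stepfn, lik_update, lik_update]
  by_cases hcond : (∑ j, X i j * b j) * (pt i - 1/2) < 0 ∨
      ((∑ j, X i j * b j) = 0 ∧ pt i < 1/2)
  · have hpbi : pb i = 1/2 := by
      simp only [hpbdef, pbar, if_pos hcond]
    have hT : lrt pt pb k ξ (Function.update y i true) =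
        stepfn ξ (a * At) (k * (1/2 * Ab)) := by
      rw [hφ true]; norm_num [hpbi]
    have hF : lrt pt pb k ξ (Function.update y i false) =
        stepfn ξ ((1 - a) * At) (k * (1/2 * Ab)) := by
      rw [hφ false]; norm_num [hpbi]
    rcases lt_trichotomy (∑ j, X i j * b j) 0 with hS | hS | hS
    · have ha : 1/2 < a := by
        rcases hcond with h | h
        · nlinarith
        · exact absurd h.1 (ne_of_lt hS)
      have hpi : p i ≤ 1/2 := (hp2 i).2 (le_of_lt hS)
      have hmono : lrt pt pb k ξ (Function.update y i false) ≤
          lrt pt pb k ξ (Function.update y i true) := by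
        rw [hT, hF]
        exact stepfn_mono hξ.1 hξ.2 _ (mul_le_mul_of_nonneg_right (by linarith) hAt)
      have h1 : p i - pb i ≤ 0 := by rw [hpbi]; linarith
      exact mul_nonpos_iff.mpr (Or.inr ⟨h1, by linarith⟩)
    · have ha : a < 1/2 := by
        rcases hcond with h | h
        · rw [hS] at h; linarith
        · exact h.2
      have hpi : p i = 1/2 := le_antisymm ((hp2 i).2 (le_of_eq hS)) ((hp2 i).1 (ge_of_eq hS))
      have : p i - pb i = 0 := by rw [hpi, hpbi]; ring
      rw [this, zero_mul]
    · have ha : a < 1/2 := by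
        rcases hcond with h | h
        · nlinarith
        · exact h.2
      have hpi : 1/2 ≤ p i := (hp2 i).1 (le_of_lt hS)
      have hmono : lrt pt pb k ξ (Function.update y i true) ≤
          lrt pt pb k ξ (Function.update y i false) := by
        rw [hT, hF]
        exact stepfn_mono hξ.1 hξ.2 _ (mul_le_mul_of_nonneg_right (by linarith) hAt)
      have h1 : 0 ≤ p i - pb i := by rw [hpbi]; linarith
      exact mul_nonpos_iff.mpr (Or.inl ⟨h1, by linarith⟩)
  · have hpbi : pb i = a := by
      simp only [hpbdef, pbar, if_neg hcond, hadef]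
    have hT : lrt pt pb k ξ (Function.update y i true) = stepfn ξ At (k * Ab) := by
      rw [hφ true]
      have h2 : (if (true : Bool) = true then a else 1 - a) = a := rfl
      have h3 : (if (true : Bool) = true then pb i else 1 - pb i) = pb i := rfl
      have h1 : k * (pb i * Ab) = a * (k * Ab) := by rw [hpbi]; ring
      rw [h2, h3, h1, stepfn_smul a At (k * Ab) ha0]
    have hF : lrt pt pb k ξ (Function.update y i false) = stepfn ξ At (k * Ab) := by
      rw [hφ false]
      have h2 : (if (false : Bool) = true then a else 1 - a) = 1 - a := rfl
      have h3 : (if (false : Bool) = true then pb i else 1 - pb i) = 1 - pb i := rfl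
      have h1 : k * ((1 - pb i) * Ab) = (1 - a) * (k * Ab) := by rw [hpbi]; ring
      rw [h2, h3, h1, stepfn_smul (1 - a) At (k * Ab) (by linarith)]
    rw [hT, hF, sub_self, mul_zero]

/-- Size-control part of Theorem 6: the likelihood ratio test `φ̄` controls size over
the composite null `N(b)`: `RP_{φ̄}(p) ≤ α` for every `p ∈ N(b)`. -/
theorem theorem6_size_control
    {n K : ℕ} (hn : 1 ≤ n)
    (X : Fin n → Fin K → ℝ) (b : Fin K → ℝ)
    (pt : Fin n → ℝ) (hpt : ∀ i, pt i ∈ Set.Ioo (0 : ℝ) 1)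
    (α : ℝ) (hα : α ∈ Set.Ioo (0 : ℝ) 1)
    (k ξ : ℝ) (hk : 0 ≤ k) (hξ : ξ ∈ Set.Icc (0 : ℝ) 1)
    (hcal : rejProb (lrt pt (pbar X b pt) k ξ) (pbar X b pt) = α) :
    ∀ p ∈ nullSet X b, rejProb (lrt pt (pbar X b pt) k ξ) p ≤ α := by
  intro p hp
  set pb := pbar X b pt with hpbdef
  set φ := lrt pt pb k ξ with hφdef
  set q : ℕ → Fin n → ℝ := fun m j => if (j : ℕ) < m then pb j else p j with hqdef
  have hq0 : q 0 = p := by funext j; simp [hqdef]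
  have hqn : q n = pb := by funext j; simp [hqdef, j.isLt]
  have hstep : ∀ m, rejProb φ (q m) ≤ rejProb φ (q (m + 1)) := by
    intro m
    by_cases hm : m < n
    · set i : Fin n := ⟨m, hm⟩ with hidef
      have hqi : q m i = p i := by simp [hqdef, hidef]
      have e1 : q m = Function.update (q m) i (p i) := by
        rw [← hqi]; exact (Function.update_eq_self i (q m)).symm
      have e2 : q (m + 1) = Function.update (q m) i (pb i) := by
        funext j
        by_cases hj : j = i
        · subst hj
          rw [Function.update_self]
          simp [hqdef, hidef]
        · rw [Function.update_of_ne hj]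
          have hjm : (j : ℕ) ≠ m := fun h => hj (Fin.ext h)
          have : ((j : ℕ) < m + 1) ↔ ((j : ℕ) < m) := by omega
          simp only [hqdef, this]
      rw [e1, e2]
      refine rejProb_mono φ (q m) i (pb i) (p i) ?_ ?_
      · intro j hj
        simp only [hqdef]
        split_ifs
        · exact pbar_mem X b pt hpt j
        · exact ⟨(hp.1 j).1, (hp.1 j).2⟩
      · intro y
        exact key_sign X b pt hpt k ξ hk hξ p hp i y
    · have : q (m + 1) = q m := by
        funext j
        have hjn : (j : ℕ) < n := j.isLt
        have : ((j : ℕ) < m + 1) ↔ ((j : ℕ) < m) := by omega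
        simp only [hqdef, this]
      rw [this]
  have hchain : ∀ m, rejProb φ (q 0) ≤ rejProb φ (q m) := by
    intro m
    induction m with
    | zero => exact le_refl _
    | succ m ih => exact ih.trans (hstep m)
  have := hchain n
  rw [hq0, hqn] at this
  rw [← hcal]
  exact this
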